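/- Let R be a commutative ring with unity and M an R-module. If (x_1, …, x_t) ∈ R^t is an M-regular sequence, then for every integer n > 0 the tuple (x_1, …, x_{t−1}, x_t^n), obtained by replacing the last entry by its n-th power, is also an M-regular sequence. -/

import Mathlib

/-- If `(x₁, …, x_t)` is an `M`-regular sequence over a commutative ring `R`, then for every
`n > 0` the sequence `(x₁, …, x_{t-1}, x_tⁿ)`, obtained by replacing the last entry by its
`n`-th power, is also an `M`-regular sequence. -/
theorem isRegular_append_pow_last_of_isRegular
    (R : Type*) [CommRing R] (M : Type*) [AddCommGroup M] [Module R M]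
    (xs : List R) (y : R) (n : ℕ) (hn : 0 < n)
    (h : RingTheory.Sequence.IsRegular M (xs ++ [y])) :
    RingTheory.Sequence.IsRegular M (xs ++ [y ^ n]) := by
  obtain ⟨hw, hne⟩ := h
  rw [RingTheory.Sequence.isWeaklyRegular_append_iff,
    RingTheory.Sequence.isWeaklyRegular_singleton_iff] at hw
  constructor
  · rw [RingTheory.Sequence.isWeaklyRegular_append_iff,
      RingTheory.Sequence.isWeaklyRegular_singleton_iff]
    exact ⟨hw.1, hw.2.pow n⟩
  · intro htop
    apply hne
    have hle : Ideal.ofList (xs ++ [y ^ n]) ≤ Ideal.ofList (xs ++ [y]) := by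
      rw [Ideal.ofList_append, Ideal.ofList_append, Ideal.ofList_singleton,
        Ideal.ofList_singleton]
      apply sup_le_sup_left
      rw [Ideal.span_singleton_le_span_singleton]
      exact dvd_pow_self y hn.ne'
    exact le_antisymm (htop.le.trans (Submodule.smul_mono_left hle)) le_top
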